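/- arXiv:math/0509661 — 3 statements merged into one kernel-verified Lean document; each statement's English description precedes it below -/
import Mathlib

section
/- The group Tr_3, generated by elements R_{ij} for distinct i,j in {1,2,3} with relations R_{ij} = R_{ji}^{-1}, R_{12}R_{13}R_{23} = R_{23}R_{13}R_{12} and all permuted instances of the Yang–Baxter relation, is isomorphic to the free product Z^2 * Z. -/
/-- Index type for generators `R_{ij}`, `i ≠ j`. -/
def PairNe (n : ℕ) := {p : Fin n × Fin n // p.1 ≠ p.2}

/-- The generator `R_{ij}` in the free group. -/
def fgen {n : ℕ} (i j : Fin n) (h : i ≠ j) : FreeGroup (PairNe n) :=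
  FreeGroup.of ⟨(i, j), h⟩

/-- Relations of `QTr_n`: the quantum Yang–Baxter relations
`R_{ij}R_{ik}R_{jk} = R_{jk}R_{ik}R_{ij}` for distinct `i,j,k`, and commutation
`R_{ij}R_{kl} = R_{kl}R_{ij}` for distinct `i,j,k,l`. -/
def qtrRels (n : ℕ) : Set (FreeGroup (PairNe n)) :=
  {w | (∃ (i j k : Fin n) (hij : i ≠ j) (hik : i ≠ k) (hjk : j ≠ k),
          w = fgen i j hij * fgen i k hik * fgen j k hjk *
              (fgen j k hjk * fgen i k hik * fgen i j hij)⁻¹) ∨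
       (∃ (i j k l : Fin n) (hij : i ≠ j) (hkl : k ≠ l),
          i ≠ k ∧ i ≠ l ∧ j ≠ k ∧ j ≠ l ∧
          w = fgen i j hij * fgen k l hkl * (fgen k l hkl * fgen i j hij)⁻¹)}

/-- Relations of `Tr_n`: those of `QTr_n` together with `R_{ij} R_{ji} = 1`. -/
def trRels (n : ℕ) : Set (FreeGroup (PairNe n)) :=
  qtrRels n ∪ {w | ∃ (i j : Fin n) (hij : i ≠ j), w = fgen i j hij * fgen j i hij.symm}

/-- The quasitriangular group `QTr_n`. -/
abbrev QTrGroup (n : ℕ) := PresentedGroup (qtrRels n)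

/-- The triangular group `Tr_n`. -/
abbrev TrGroup (n : ℕ) := PresentedGroup (trRels n)

/-- The generator `R_{ij}` of `QTr_n`. -/
def QTrGen {n : ℕ} (i j : Fin n) (h : i ≠ j) : QTrGroup n := PresentedGroup.of ⟨(i, j), h⟩

/-- The generator `R_{ij}` of `Tr_n`. -/
def TrGen {n : ℕ} (i j : Fin n) (h : i ≠ j) : TrGroup n := PresentedGroup.of ⟨(i, j), h⟩


namespace Stmt7

abbrev F := Monoid.Coprod (Multiplicative (ℤ × ℤ)) (Multiplicative ℤ)

def t : F := Monoid.Coprod.inr (Multiplicative.ofAdd 1)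
def u : F := Monoid.Coprod.inl (Multiplicative.ofAdd ((1 : ℤ), (0 : ℤ)))
def w : F := Monoid.Coprod.inl (Multiplicative.ofAdd ((0 : ℤ), (1 : ℤ)))

lemma huw : Commute u w := by
  show u * w = w * u
  rw [u, w, ← MonoidHom.map_mul Monoid.Coprod.inl, ← MonoidHom.map_mul Monoid.Coprod.inl,
    mul_comm]

def f (p : PairNe 3) : F :=
  match p.1.1.val, p.1.2.val with
  | 0, 1 => t
  | 1, 0 => t⁻¹
  | 0, 2 => t⁻¹ * u
  | 2, 0 => u⁻¹ * t
  | 1, 2 => w * t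
  | 2, 1 => t⁻¹ * w⁻¹
  | _, _ => 1

lemma f01 {h0 h1 h} : f ⟨(⟨0,h0⟩, ⟨1,h1⟩), h⟩ = t := rfl
lemma f10 {h0 h1 h} : f ⟨(⟨1,h1⟩, ⟨0,h0⟩), h⟩ = t⁻¹ := rfl
lemma f02 {h0 h2 h} : f ⟨(⟨0,h0⟩, ⟨2,h2⟩), h⟩ = t⁻¹ * u := rfl
lemma f20 {h0 h2 h} : f ⟨(⟨2,h2⟩, ⟨0,h0⟩), h⟩ = u⁻¹ * t := rfl
lemma f12 {h1 h2 h} : f ⟨(⟨1,h1⟩, ⟨2,h2⟩), h⟩ = w * t := rfl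
lemma f21 {h1 h2 h} : f ⟨(⟨2,h2⟩, ⟨1,h1⟩), h⟩ = t⁻¹ * w⁻¹ := rfl

lemma lift_fgen (i j : Fin 3) (h : i ≠ j) : FreeGroup.lift f (fgen i j h) = f ⟨(i, j), h⟩ :=
  FreeGroup.lift_apply_of

lemma hrel : ∀ r ∈ trRels 3, FreeGroup.lift f r = 1 := by
  rintro r ((⟨i, j, k, hij, hik, hjk, rfl⟩ | ⟨i, j, k, l, hij, hkl, hik, hil, hjk, hjl, rfl⟩) | ⟨i, j, hij, rfl⟩)
  · have H := huw
    have H1 := H.inv_left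
    have H2 := H.inv_right
    have H3 := H.inv_inv
    simp only [map_mul, map_inv, lift_fgen]
    fin_cases i <;> fin_cases j <;> fin_cases k <;>
      first
        | exact absurd rfl hij
        | exact absurd rfl hik
        | exact absurd rfl hjk
        | (simp only [f01, f10, f02, f20, f12, f21]
           rw [mul_inv_eq_one]
           simp only [mul_assoc, mul_inv_rev, inv_inv, inv_mul_cancel_left, mul_inv_cancel_left,
             mul_inv_cancel, inv_mul_cancel, mul_one, one_mul]
           first
             | rw [H.eq] | rw [H.eq.symm] | rw [H1.eq] | rw [H1.eq.symm]
             | rw [H2.eq] | rw [H2.eq.symm] | rw [H3.eq] | rw [H3.eq.symm]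
             | rw [← mul_assoc, ← mul_assoc, H.eq]
             | rw [← mul_assoc, ← mul_assoc, H.eq.symm]
             | rw [← mul_assoc, ← mul_assoc, H1.eq]
             | rw [← mul_assoc, ← mul_assoc, H2.eq]
             | rw [← mul_assoc, ← mul_assoc, H3.eq])
  · exfalso
    fin_cases i <;> fin_cases j <;> fin_cases k <;> fin_cases l <;> simp_all
  · simp only [map_mul, lift_fgen]
    fin_cases i <;> fin_cases j <;>
      first
        | exact absurd rfl hij
        | (simp only [f01, f10, f02, f20, f12, f21]; group)

def Φ : TrGroup 3 →* F := PresentedGroup.toGroup hrel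

def a : TrGroup 3 := TrGen 0 1 (by decide)
def b : TrGroup 3 := TrGen 0 2 (by decide)
def c : TrGroup 3 := TrGen 1 2 (by decide)

lemma tr_rel_one {r : FreeGroup (PairNe 3)} (hr : r ∈ trRels 3) :
    PresentedGroup.mk (trRels 3) r = 1 :=
  (QuotientGroup.eq_one_iff _).mpr (Subgroup.subset_normalClosure hr)

lemma hginv (i j : Fin 3) (hij : i ≠ j) :
    TrGen i j hij * TrGen j i hij.symm = 1 := by
  have h := tr_rel_one (Or.inr ⟨i, j, hij, rfl⟩)
  rw [map_mul] at h
  exact h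

lemma habc : a * b * c = c * b * a := by
  have h := tr_rel_one (Or.inl (Or.inl
    ⟨0, 1, 2, by decide, by decide, by decide, rfl⟩))
  rw [map_mul, map_mul, map_mul, map_inv, map_mul, map_mul, mul_inv_eq_one] at h
  exact h

def X : TrGroup 3 := a * b
def Y : TrGroup 3 := c * a⁻¹

lemma hXY : Commute X Y := by
  show X * Y = Y * X
  have h1 : X * Y = a * b * c * a⁻¹ := by rw [X, Y]; group
  have h2 : Y * X = c * b := by rw [X, Y]; group
  rw [h1, h2, habc]
  group

def ψ1 : Multiplicative (ℤ × ℤ) →* TrGroup 3 :=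
  MonoidHom.mk' (fun p => X ^ (p.toAdd.1) * Y ^ (p.toAdd.2)) (by
    intro p q
    have h := (hXY.zpow_zpow q.toAdd.1 p.toAdd.2).eq
    show X ^ (p.toAdd.1 + q.toAdd.1) * Y ^ (p.toAdd.2 + q.toAdd.2) = _
    rw [zpow_add, zpow_add, mul_assoc, ← mul_assoc (X ^ q.toAdd.1), h,
      mul_assoc, ← mul_assoc, ← mul_assoc])

def Ψ : F →* TrGroup 3 := Monoid.Coprod.lift ψ1 (zpowersHom _ a)

lemma Ψt : Ψ t = a := by
  rw [Ψ, t, Monoid.Coprod.lift_apply_inr, zpowersHom_apply, toAdd_ofAdd, zpow_one]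

lemma Ψu : Ψ u = X := by
  rw [Ψ, u, Monoid.Coprod.lift_apply_inl]
  show X ^ (1 : ℤ) * Y ^ (0 : ℤ) = X
  rw [zpow_one, zpow_zero, mul_one]

lemma Ψw : Ψ w = Y := by
  rw [Ψ, w, Monoid.Coprod.lift_apply_inl]
  show X ^ (0 : ℤ) * Y ^ (1 : ℤ) = Y
  rw [zpow_one, zpow_zero, one_mul]

lemma left_inv_hom : Ψ.comp Φ = MonoidHom.id (TrGroup 3) := by
  ext x
  obtain ⟨⟨i, j⟩, hij⟩ := x
  rw [MonoidHom.comp_apply, MonoidHom.id_apply, Φ]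
  erw [PresentedGroup.toGroup.of]
  fin_cases i <;> fin_cases j <;>
    first
      | exact absurd rfl hij
      | (simp only [f01, f10, f02, f20, f12, f21, map_mul, map_inv, Ψt, Ψu, Ψw])
  · -- (0,1) : a
    rfl
  · -- (0,2) : a⁻¹ * X = b
    rw [X, inv_mul_cancel_left]; rfl
  · -- (1,0) : a⁻¹
    exact inv_eq_of_mul_eq_one_right (hginv 0 1 (by decide))
  · -- (1,2) : Y * a = c
    rw [Y, inv_mul_cancel_right]; rfl
  · -- (2,0) : X⁻¹ * a = b⁻¹
    rw [X, mul_inv_rev, mul_assoc, inv_mul_cancel, mul_one]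
    exact inv_eq_of_mul_eq_one_right (hginv 0 2 (by decide))
  · -- (2,1) : a⁻¹ * Y⁻¹ = c⁻¹
    rw [Y, mul_inv_rev, inv_inv, inv_mul_cancel_left]
    exact inv_eq_of_mul_eq_one_right (hginv 1 2 (by decide))

lemma ΦX : Φ X = u := by
  rw [X, map_mul]
  show Φ (TrGen 0 1 (by decide)) * Φ (TrGen 0 2 (by decide)) = u
  erw [TrGen, TrGen, Φ, PresentedGroup.toGroup.of, PresentedGroup.toGroup.of]
  show t * (t⁻¹ * u) = u
  rw [mul_inv_cancel_left]

lemma ΦY : Φ Y = w := by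
  rw [Y, map_mul, map_inv]
  show Φ (TrGen 1 2 (by decide)) * (Φ (TrGen 0 1 (by decide)))⁻¹ = w
  erw [TrGen, TrGen, Φ, PresentedGroup.toGroup.of, PresentedGroup.toGroup.of]
  show w * t * t⁻¹ = w
  rw [mul_inv_cancel_right]

lemma Φa : Φ a = t := rfl

lemma inl_zpow (g : Multiplicative (ℤ × ℤ)) (n : ℤ) :
    (Monoid.Coprod.inl g : F) ^ n = Monoid.Coprod.inl (g ^ n) :=
  (map_zpow (Monoid.Coprod.inl : Multiplicative (ℤ × ℤ) →* F) g n).symm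

lemma inr_zpow (g : Multiplicative ℤ) (n : ℤ) :
    (Monoid.Coprod.inr g : F) ^ n = Monoid.Coprod.inr (g ^ n) :=
  (map_zpow (Monoid.Coprod.inr : Multiplicative ℤ →* F) g n).symm

lemma right_inv_pt (y : F) : Φ (Ψ y) = y := by
  induction y using Monoid.Coprod.induction_on with
  | inl x =>
      rw [Ψ, Monoid.Coprod.lift_apply_inl]
      show Φ (X ^ x.toAdd.1 * Y ^ x.toAdd.2) = _
      rw [map_mul, map_zpow, map_zpow, ΦX, ΦY, u, w,
        inl_zpow, inl_zpow,
        ← ofAdd_zsmul, ← ofAdd_zsmul, ← MonoidHom.map_mul Monoid.Coprod.inl, ← ofAdd_add]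
      congr 1
      show Multiplicative.ofAdd (_ + _) = _
      have : x.toAdd.1 • ((1 : ℤ), (0 : ℤ)) + x.toAdd.2 • ((0 : ℤ), (1 : ℤ)) = x.toAdd := by
        simp [Prod.ext_iff]
      rw [this, ofAdd_toAdd]
  | inr x =>
      rw [Ψ, Monoid.Coprod.lift_apply_inr, zpowersHom_apply, map_zpow, Φa, t,
        inr_zpow, ← ofAdd_zsmul, smul_eq_mul, mul_one, ofAdd_toAdd]
  | mul x y hx hy => rw [map_mul, map_mul, hx, hy]

end Stmt7

/-- `Tr_3` is isomorphic to the free product `ℤ² ∗ ℤ`. -/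
theorem stmt_7 :
    Nonempty (TrGroup 3 ≃* Monoid.Coprod (Multiplicative (ℤ × ℤ)) (Multiplicative ℤ)) := by
  exact ⟨{ toFun := Stmt7.Φ, invFun := Stmt7.Ψ,
           left_inv := fun x => DFunLike.congr_fun Stmt7.left_inv_hom x,
           right_inv := Stmt7.right_inv_pt,
           map_mul' := map_mul Stmt7.Φ }⟩
end

section
/- In the group QTr_n (generated by R_{ij} for distinct i,j in [n] with relations R_{ij}R_{ik}R_{jk} = R_{jk}R_{ik}R_{ij} for distinct i,j,k and R_{ij}R_{kl} = R_{kl}R_{ij} for distinct i,j,k,l), the map R_{ij} -> R_{ij} for all i,j followed by the inclusion sending R_{ij} (i<j only) into QTr_n yields a split surjection QTr_n -> Tr_n; i.e., Tr_n is a retract of QTr_n. -/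
section Aux

lemma mk_rel_one {α : Type*} {rels : Set (FreeGroup α)} {r : FreeGroup α} (hr : r ∈ rels) :
    PresentedGroup.mk rels r = 1 :=
  (QuotientGroup.eq_one_iff _).mpr (Subgroup.subset_normalClosure hr)

variable {G : Type*} [Group G] {x y z : G}

lemma yb2 (h : x*y*z = z*y*x) : y*x*z⁻¹ = z⁻¹*x*y := by
  calc y*x*z⁻¹ = z⁻¹*(z*y*x)*z⁻¹ := by group
    _ = z⁻¹*(x*y*z)*z⁻¹ := by rw [← h]
    _ = z⁻¹*x*y := by group

lemma yb3 (h : x*y*z = z*y*x) : x⁻¹*z*y = y*z*x⁻¹ := by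
  calc x⁻¹*z*y = x⁻¹*(z*y*x)*x⁻¹ := by group
    _ = x⁻¹*(x*y*z)*x⁻¹ := by rw [← h]
    _ = y*z*x⁻¹ := by group

lemma yb4 (h : x*y*z = z*y*x) : y⁻¹*z⁻¹*x = x*z⁻¹*y⁻¹ := by
  calc y⁻¹*z⁻¹*x = (x⁻¹*z*y)⁻¹ := by group
    _ = (y*z*x⁻¹)⁻¹ := by rw [yb3 h]
    _ = x*z⁻¹*y⁻¹ := by group

lemma yb5 (h : x*y*z = z*y*x) : z*x⁻¹*y⁻¹ = y⁻¹*x⁻¹*z := by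
  calc z*x⁻¹*y⁻¹ = (y*x*z⁻¹)⁻¹ := by group
    _ = (z⁻¹*x*y)⁻¹ := by rw [yb2 h]
    _ = y⁻¹*x⁻¹*z := by group

lemma yb6 (h : x*y*z = z*y*x) : z⁻¹*y⁻¹*x⁻¹ = x⁻¹*y⁻¹*z⁻¹ := by
  calc z⁻¹*y⁻¹*x⁻¹ = (x*y*z)⁻¹ := by group
    _ = (z*y*x)⁻¹ := by rw [h]
    _ = x⁻¹*y⁻¹*z⁻¹ := by group

end Aux

lemma qtr_yb {n : ℕ} (i j k : Fin n) (hij : i ≠ j) (hik : i ≠ k) (hjk : j ≠ k) :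
    QTrGen i j hij * QTrGen i k hik * QTrGen j k hjk =
      QTrGen j k hjk * QTrGen i k hik * QTrGen i j hij := by
  have h1 := mk_rel_one (rels := qtrRels n)
    (Or.inl ⟨i, j, k, hij, hik, hjk, rfl⟩)
  rw [map_mul, map_mul, map_inv, map_mul, map_mul, mul_inv_eq_one] at h1
  exact h1

lemma qtr_comm {n : ℕ} (i j k l : Fin n) (hij : i ≠ j) (hkl : k ≠ l)
    (hik : i ≠ k) (hil : i ≠ l) (hjk : j ≠ k) (hjl : j ≠ l) :
    Commute (QTrGen i j hij) (QTrGen k l hkl) := by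
  have h1 := mk_rel_one (rels := qtrRels n)
    (Or.inr ⟨i, j, k, l, hij, hkl, hik, hil, hjk, hjl, rfl⟩)
  rw [map_mul, map_inv, map_mul, mul_inv_eq_one] at h1
  exact h1

lemma tr_inv {n : ℕ} (i j : Fin n) (hij : i ≠ j) :
    TrGen i j hij * TrGen j i hij.symm = 1 := by
  have h1 := mk_rel_one (rels := trRels n) (Or.inr ⟨i, j, hij, rfl⟩)
  rw [map_mul] at h1
  exact h1

/-- The map on generators defining `f : Tr_n → QTr_n`. -/
def fmap (n : ℕ) (p : PairNe n) : QTrGroup n :=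
  if h : p.1.1 < p.1.2 then QTrGen p.1.1 p.1.2 p.2 else (QTrGen p.1.2 p.1.1 p.2.symm)⁻¹

lemma fmap_lt {n : ℕ} {i j : Fin n} (hij : i ≠ j) (h : i < j) :
    fmap n ⟨(i, j), hij⟩ = QTrGen i j hij := dif_pos h

lemma fmap_gt {n : ℕ} {i j : Fin n} (hij : i ≠ j) (h : j < i) :
    fmap n ⟨(i, j), hij⟩ = (QTrGen j i hij.symm)⁻¹ := dif_neg (not_lt.mpr h.le)

lemma lift_fgen {n : ℕ} (i j : Fin n) (h : i ≠ j) :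
    FreeGroup.lift (fmap n) (fgen i j h) = fmap n ⟨(i, j), h⟩ :=
  FreeGroup.lift_apply_of

lemma fmap_rels {n : ℕ} : ∀ r ∈ trRels n, FreeGroup.lift (fmap n) r = 1 := by
  rintro r (hq | ⟨i, j, hij, rfl⟩)
  · rcases hq with ⟨i, j, k, hij, hik, hjk, rfl⟩ | ⟨i, j, k, l, hij, hkl, hik, hil, hjk, hjl, rfl⟩
    · simp only [map_mul, map_inv, mul_inv_eq_one, lift_fgen]
      rcases hij.lt_or_gt with h1 | h1 <;> rcases hik.lt_or_gt with h2 | h2 <;>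
        rcases hjk.lt_or_gt with h3 | h3
      · rw [fmap_lt hij h1, fmap_lt hik h2, fmap_lt hjk h3]
        exact qtr_yb i j k hij hik hjk
      · -- i<j, i<k, k<j : sorted i<k<j
        rw [fmap_lt hij h1, fmap_lt hik h2, fmap_gt hjk h3]
        exact yb2 (qtr_yb i k j hik hij hjk.symm)
      · -- i<j, k<i, j<k : impossible
        exact absurd (h1.trans h3) (lt_asymm h2)
      · -- i<j, k<i, k<j : sorted k<i<j
        rw [fmap_lt hij h1, fmap_gt hik h2, fmap_gt hjk h3]
        exact yb5 (qtr_yb k i j hik.symm hjk.symm hij)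
      · -- j<i, i<k, j<k : sorted j<i<k
        rw [fmap_gt hij h1, fmap_lt hik h2, fmap_lt hjk h3]
        exact yb3 (qtr_yb j i k hij.symm hjk hik)
      · -- j<i, i<k, k<j : impossible
        exact absurd (h2.trans h3) (lt_asymm h1)
      · -- j<i, k<i, j<k : sorted j<k<i
        rw [fmap_gt hij h1, fmap_gt hik h2, fmap_lt hjk h3]
        exact yb4 (qtr_yb j k i hjk hij.symm hik.symm)
      · -- j<i, k<i, k<j : sorted k<j<i
        rw [fmap_gt hij h1, fmap_gt hik h2, fmap_gt hjk h3]
        exact yb6 (qtr_yb k j i hjk.symm hik.symm hij.symm)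
    · simp only [map_mul, map_inv, mul_inv_eq_one, lift_fgen]
      have key : ∀ (a b : Fin n) (hab : a ≠ b) (c d : Fin n) (hcd : c ≠ d),
          a ≠ c → a ≠ d → b ≠ c → b ≠ d →
          Commute (fmap n ⟨(a,b),hab⟩) (QTrGen c d hcd) := by
        intro a b hab c d hcd h1 h2 h3 h4
        rcases hab.lt_or_gt with h | h
        · rw [fmap_lt hab h]; exact qtr_comm a b c d hab hcd h1 h2 h3 h4
        · rw [fmap_gt hab h]
          exact (qtr_comm b a c d hab.symm hcd h3 h4 h1 h2).inv_left
      have key2 : Commute (fmap n ⟨(i,j),hij⟩) (fmap n ⟨(k,l),hkl⟩) := by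
        rcases hkl.lt_or_gt with h | h
        · rw [fmap_lt hkl h]; exact key i j hij k l hkl hik hil hjk hjl
        · rw [fmap_gt hkl h]
          exact (key i j hij l k hkl.symm hil hik hjl hjk).inv_right
      exact key2.eq
  · simp only [map_mul, lift_fgen]
    rcases hij.lt_or_gt with h | h
    · rw [fmap_lt hij h, fmap_gt hij.symm h, mul_inv_cancel]
    · rw [fmap_gt hij h, fmap_lt hij.symm h, inv_mul_cancel]

lemma gmap_rels {n : ℕ} :
    ∀ r ∈ qtrRels n, FreeGroup.lift (fun p : PairNe n => (PresentedGroup.of p : TrGroup n)) r = 1 := by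
  have key : FreeGroup.lift (fun p : PairNe n => (PresentedGroup.of p : TrGroup n)) =
      PresentedGroup.mk (trRels n) := by
    apply FreeGroup.ext_hom
    intro p
    simp [PresentedGroup.of]
  intro r hr
  rw [key]
  exact mk_rel_one (Or.inl hr)

lemma f_TrGen {n : ℕ} (i j : Fin n) (h : i ≠ j) :
    PresentedGroup.toGroup fmap_rels (TrGen i j h) = fmap n ⟨(i, j), h⟩ :=
  PresentedGroup.toGroup.of _

lemma g_QTrGen {n : ℕ} (i j : Fin n) (h : i ≠ j) :
    PresentedGroup.toGroup gmap_rels (QTrGen i j h) = TrGen i j h :=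
  PresentedGroup.toGroup.of _

/-- the homomorphism `f : Tr_n → QTr_n` with `R_{ij} ↦ R_{ij}` for `i < j`
(and `R_{ji} ↦ R_{ij}⁻¹`), composed with `g : QTr_n → Tr_n`, `R_{ij} ↦ R_{ij}`, is the
identity of `Tr_n`; i.e. `Tr_n` is a retract (split quotient) of `QTr_n`. -/
theorem stmt_8 (n : ℕ) :
    ∃ (f : TrGroup n →* QTrGroup n) (g : QTrGroup n →* TrGroup n),
      (∀ (i j : Fin n) (h : i ≠ j), i < j → f (TrGen i j h) = QTrGen i j h) ∧
      (∀ (i j : Fin n) (h : i ≠ j), j < i → f (TrGen i j h) = (QTrGen j i h.symm)⁻¹) ∧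
      (∀ (i j : Fin n) (h : i ≠ j), g (QTrGen i j h) = TrGen i j h) ∧
      g.comp f = MonoidHom.id (TrGroup n) := by
  refine ⟨PresentedGroup.toGroup fmap_rels, PresentedGroup.toGroup gmap_rels, ?_, ?_, ?_, ?_⟩
  · intro i j h hlt
    rw [f_TrGen,
      fmap_lt h hlt]
  · intro i j h hlt
    rw [f_TrGen,
      fmap_gt h hlt]
  · intro i j h
    exact g_QTrGen i j h
  · apply PresentedGroup.ext
    rintro ⟨⟨i, j⟩, hij⟩
    show PresentedGroup.toGroup gmap_rels (PresentedGroup.toGroup fmap_rels (TrGen i j hij)) = TrGen i j hij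
    rw [f_TrGen]
    rcases hij.lt_or_gt with h | h
    · rw [fmap_lt hij h]
      exact g_QTrGen i j hij
    · rw [fmap_gt hij h, map_inv,
        g_QTrGen]
      exact inv_eq_of_mul_eq_one_right (tr_inv j i hij.symm)
end

section
/- For the polynomial P_n(t) = sum_k S(n,k) t^{n-k} (with S(n,k) the Stirling numbers of the second kind), the formal power series 1/P_n(-t) has nonnegative integer coefficients for every n. -/
set_option linter.unusedSectionVars false
set_option linter.unusedVariables false

/-- Stirling numbers of the second kind, defined combinatorially. -/
noncomputable def stirling (n k : ℕ) : ℕ :=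
  Nat.card {P : Finpartition (Finset.univ : Finset (Fin n)) // P.parts.card = k}

/-- The formal power series `P_n(-t) = ∑_j (-1)^j S(n, n-j) t^j` (a polynomial with
constant term `S(n,n) = 1`, viewed in `ℚ[[t]]`; for `n ≥ 1` the coefficients vanish for
`j ≥ n`). -/
noncomputable def PnNeg (n : ℕ) : PowerSeries ℚ :=
  PowerSeries.mk fun j => (-1 : ℚ) ^ j * (stirling n (n - j) : ℚ)

open Finset Polynomial

namespace StirlingAux


variable {α β : Type*} [DecidableEq α] [DecidableEq β]

noncomputable def St (s : Finset α) (k : ℕ) : ℕ :=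
  Nat.card {P : Finpartition s // P.parts.card = k}

instance finiteFinpartition [Fintype α] (s : Finset α) : Finite (Finpartition s) :=
  Finite.of_injective (fun P => P.parts) fun _ _ h => Finpartition.ext h

/-! ### transfer along embeddings -/

lemma map_preimage_of_subset (f : α ↪ β) {s : Finset α} {t : Finset β} (ht : t ⊆ s.map f) :
    (t.preimage f f.injective.injOn).map f = t := by
  ext b
  simp only [Finset.mem_map, Finset.mem_preimage]
  constructor
  · rintro ⟨x, hx, rfl⟩; exact hx
  · intro hb
    obtain ⟨x, -, rfl⟩ := Finset.mem_map.1 (ht hb)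
    exact ⟨x, hb, rfl⟩

def pmap (f : α ↪ β) {s : Finset α} (P : Finpartition s) : Finpartition (s.map f) where
  parts := P.parts.image fun t => t.map f
  supIndep := by
    rw [Finset.supIndep_iff_pairwiseDisjoint]
    rintro x hx y hy hxy
    simp only [coe_image, Set.mem_image, mem_coe] at hx hy
    obtain ⟨tx, htx, rfl⟩ := hx
    obtain ⟨ty, hty, rfl⟩ := hy
    simp only [Function.onFun, id_eq]
    rw [Finset.disjoint_map]
    exact P.disjoint htx hty fun h => hxy (by rw [h])
  sup_parts := by
    rw [Finset.sup_image]
    ext b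
    simp only [Function.comp, mem_sup, Finset.mem_map, id_eq]
    constructor
    · rintro ⟨t, ht, x, hx, rfl⟩
      exact ⟨x, by rw [← P.sup_parts]; exact mem_sup.2 ⟨t, ht, hx⟩, rfl⟩
    · rintro ⟨x, hx, rfl⟩
      rw [← P.sup_parts] at hx
      obtain ⟨t, ht, hx⟩ := mem_sup.1 hx
      exact ⟨t, ht, x, hx, rfl⟩
  bot_notMem := by
    simp only [bot_eq_empty, mem_image]
    rintro ⟨t, ht, h⟩
    rw [Finset.map_eq_empty] at h
    exact P.ne_bot ht h

lemma pmap_parts_card (f : α ↪ β) {s : Finset α} (P : Finpartition s) :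
    #(pmap f P).parts = #P.parts :=
  card_image_of_injective _ (Finset.map_injective f)

noncomputable def punmap (f : α ↪ β) {s : Finset α} (Q : Finpartition (s.map f)) : Finpartition s where
  parts := Q.parts.image fun t => t.preimage f f.injective.injOn
  supIndep := by
    rw [Finset.supIndep_iff_pairwiseDisjoint]
    rintro x hx y hy hxy
    simp only [coe_image, Set.mem_image, mem_coe] at hx hy
    obtain ⟨tx, htx, rfl⟩ := hx
    obtain ⟨ty, hty, rfl⟩ := hy
    have htxty : tx ≠ ty := by
      rintro rfl; exact hxy rfl
    have := Q.disjoint htx hty htxty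
    simp only [Function.onFun, id_eq] at this ⊢
    rw [Finset.disjoint_left] at this ⊢
    intro x hx hy
    rw [Finset.mem_preimage] at hx hy
    exact this hx hy
  sup_parts := by
    ext x
    simp only [mem_sup, id_eq, mem_image]
    constructor
    · rintro ⟨t, ⟨u, hu, rfl⟩, hx⟩
      rw [Finset.mem_preimage] at hx
      have : f x ∈ s.map f := by
        rw [← Q.sup_parts]; exact mem_sup.2 ⟨u, hu, hx⟩
      exact (Finset.mem_map' f).1 this
    · intro hx
      have : f x ∈ s.map f := (Finset.mem_map' f).2 hx
      rw [← Q.sup_parts] at this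
      obtain ⟨u, hu, hxu⟩ := mem_sup.1 this
      exact ⟨u.preimage f f.injective.injOn, ⟨u, hu, rfl⟩, by rwa [Finset.mem_preimage]⟩
  bot_notMem := by
    simp only [bot_eq_empty, mem_image]
    rintro ⟨t, ht, h⟩
    have hne := Q.nonempty_of_mem_parts ht
    have hsub : t ⊆ s.map f := Q.le ht
    obtain ⟨b, hb⟩ := hne
    obtain ⟨x, -, rfl⟩ := Finset.mem_map.1 (hsub hb)
    have : x ∈ t.preimage f f.injective.injOn := by rwa [Finset.mem_preimage]
    rw [h] at this
    exact absurd this (Finset.notMem_empty x)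

noncomputable def mapEquiv (f : α ↪ β) (s : Finset α) : Finpartition s ≃ Finpartition (s.map f) where
  toFun := pmap f
  invFun := punmap f
  left_inv P := by
    apply Finpartition.ext
    show (P.parts.image fun t => t.map f).image (fun t => t.preimage f f.injective.injOn)
        = P.parts
    rw [Finset.image_image]
    refine (Finset.image_congr ?_).trans Finset.image_id
    intro t _
    simp only [Function.comp_apply]
    exact Finset.preimage_map f t
  right_inv Q := by
    apply Finpartition.ext
    show (Q.parts.image fun t => t.preimage f f.injective.injOn).image (fun t => t.map f)
        = Q.parts
    rw [Finset.image_image]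
    refine (Finset.image_congr ?_).trans Finset.image_id
    intro t ht
    simp only [Function.comp_apply]
    exact map_preimage_of_subset f (Q.le ht)

lemma St_map (f : α ↪ β) (s : Finset α) (k : ℕ) : St (s.map f) k = St s k :=
  (Nat.card_congr
    (Equiv.subtypeEquiv (mapEquiv f s) (fun P => by
      show #P.parts = k ↔ #(pmap f P).parts = k
      rw [pmap_parts_card]))).symm


/-! ### the insert recurrence -/

section Insert

variable {a : α} {s : Finset α}

lemma not_mem_of_ne_part (ha : a ∉ s) (P : Finpartition (insert a s)) {t : Finset α}
    (ht : t ∈ P.parts) (hne : t ≠ P.part a) : a ∉ t := fun hat =>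
  hne (Finpartition.part_eq_of_mem P ht hat).symm

lemma part_mem' (P : Finpartition (insert a s)) : P.part a ∈ P.parts :=
  P.part_mem.2 (mem_insert_self a s)

lemma mem_part' (P : Finpartition (insert a s)) : a ∈ P.part a :=
  P.mem_part (mem_insert_self a s)

/-- restriction of a partition of `insert a s` to `s` -/
noncomputable def rest (ha : a ∉ s) (P : Finpartition (insert a s)) : Finpartition s :=
  Finpartition.ofErase (P.parts.image fun t => t.erase a)
    (by
      rw [Finset.supIndep_iff_pairwiseDisjoint]
      rintro x hx y hy hxy
      simp only [coe_image, Set.mem_image, mem_coe] at hx hy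
      obtain ⟨tx, htx, rfl⟩ := hx
      obtain ⟨ty, hty, rfl⟩ := hy
      have htxty : tx ≠ ty := by rintro rfl; exact hxy rfl
      have := P.disjoint htx hty htxty
      simp only [Function.onFun, id_eq] at this ⊢
      exact this.mono (erase_subset _ _) (erase_subset _ _))
    (by
      ext b
      simp only [mem_sup, id_eq, mem_image]
      constructor
      · rintro ⟨x, ⟨t, ht, rfl⟩, hb⟩
        have hbt := Finset.mem_of_mem_erase hb
        have hba : b ≠ a := Finset.ne_of_mem_erase hb
        have : b ∈ insert a s := by
          rw [← P.sup_parts]; exact mem_sup.2 ⟨t, ht, hbt⟩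
        rcases mem_insert.1 this with h | h
        · exact absurd h hba
        · exact h
      · intro hb
        have hba : b ≠ a := fun h => ha (h ▸ hb)
        have : b ∈ insert a s := mem_insert_of_mem hb
        rw [← P.sup_parts] at this
        obtain ⟨t, ht, hbt⟩ := mem_sup.1 this
        exact ⟨t.erase a, ⟨t, ht, rfl⟩, Finset.mem_erase.2 ⟨hba, hbt⟩⟩)

lemma mem_rest_parts (ha : a ∉ s) (P : Finpartition (insert a s)) {u : Finset α} :
    u ∈ (rest ha P).parts ↔ u ≠ ∅ ∧ ∃ t ∈ P.parts, t.erase a = u := by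
  show u ∈ (P.parts.image fun t => t.erase a).erase ⊥ ↔ _
  rw [Finset.mem_erase, Finset.mem_image, Finset.bot_eq_empty]

lemma rest_parts_of_singleton (ha : a ∉ s) (P : Finpartition (insert a s))
    (h : P.part a = {a}) : (rest ha P).parts = P.parts.erase {a} := by
  ext u
  rw [mem_rest_parts, Finset.mem_erase]
  constructor
  · rintro ⟨hne, t, ht, rfl⟩
    have hta : t ≠ {a} := by
      rintro rfl; exact hne (by simp)
    have hat : a ∉ t := not_mem_of_ne_part ha P ht (h ▸ hta)
    rw [Finset.erase_eq_of_notMem hat]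
    exact ⟨hta, ht⟩
  · rintro ⟨hune, hu⟩
    have hat : a ∉ u := not_mem_of_ne_part ha P hu (h ▸ hune)
    exact ⟨fun he => P.ne_bot hu he, u, hu, Finset.erase_eq_of_notMem hat⟩

lemma rest_parts_of_ne_singleton (ha : a ∉ s) (P : Finpartition (insert a s))
    (h : P.part a ≠ {a}) :
    (rest ha P).parts = insert ((P.part a).erase a) (P.parts.erase (P.part a)) := by
  have hpe : ((P.part a).erase a).Nonempty := by
    rcases Finset.eq_empty_or_nonempty ((P.part a).erase a) with he | hne
    · exfalso
      apply h
      apply Finset.Subset.antisymm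
      · intro x hx
        rcases eq_or_ne x a with rfl | hxa
        · exact Finset.mem_singleton_self x
        · exact absurd (Finset.mem_erase.2 ⟨hxa, hx⟩) (he ▸ Finset.notMem_empty x)
      · intro x hx
        rw [Finset.mem_singleton.1 hx]
        exact mem_part' P
    · exact hne
  ext u
  rw [mem_rest_parts, Finset.mem_insert, Finset.mem_erase]
  constructor
  · rintro ⟨hne, t, ht, rfl⟩
    rcases eq_or_ne t (P.part a) with rfl | htp
    · exact Or.inl rfl
    · have hat : a ∉ t := not_mem_of_ne_part ha P ht htp
      rw [Finset.erase_eq_of_notMem hat]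
      exact Or.inr ⟨htp, ht⟩
  · rintro (rfl | ⟨hup, hu⟩)
    · exact ⟨hpe.ne_empty, P.part a, part_mem' P, rfl⟩
    · have hat : a ∉ u := not_mem_of_ne_part ha P hu hup
      exact ⟨fun he => P.ne_bot hu he, u, hu, Finset.erase_eq_of_notMem hat⟩

lemma erase_part_not_mem (ha : a ∉ s) (P : Finpartition (insert a s)) :
    (P.part a).erase a ∉ P.parts.erase (P.part a) := by
  intro hmem
  have h1 : Disjoint ((P.part a).erase a) (P.part a) :=
    P.disjoint (Finset.mem_of_mem_erase hmem) (part_mem' P) (Finset.ne_of_mem_erase hmem)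
  obtain ⟨x, hx⟩ := P.nonempty_of_mem_parts (Finset.mem_of_mem_erase hmem)
  exact Finset.disjoint_left.1 h1 hx (Finset.mem_of_mem_erase hx)

/-- add `a` as a singleton part -/
noncomputable def addSingleton (ha : a ∉ s) (Q : Finpartition s) : Finpartition (insert a s) :=
  Q.extend (b := {a}) (by simp [Finset.bot_eq_empty])
    (Finset.disjoint_singleton_right.2 ha) (by rw [sup_eq_union, Finset.union_comm, ← Finset.insert_eq])

lemma addSingleton_parts (ha : a ∉ s) (Q : Finpartition s) :
    (addSingleton ha Q).parts = insert {a} Q.parts := rfl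

lemma addSingleton_card (ha : a ∉ s) (Q : Finpartition s) :
    #(addSingleton ha Q).parts = #Q.parts + 1 :=
  Finpartition.card_extend Q _ _

/-- add `a` to the part `t` -/
noncomputable def addToPart (ha : a ∉ s) (Q : Finpartition s) {t : Finset α}
    (ht : t ∈ Q.parts) : Finpartition (insert a s) where
  parts := insert (insert a t) (Q.parts.erase t)
  supIndep := by
    rw [Finset.supIndep_iff_pairwiseDisjoint]
    have hdisj : ∀ u ∈ Q.parts.erase t, Disjoint (insert a t) u := by
      intro u hu
      have hau : a ∉ u := fun hau => ha (Q.le (Finset.mem_of_mem_erase hu) hau)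
      have htu : Disjoint t u :=
        Q.disjoint ht (Finset.mem_of_mem_erase hu) (Finset.ne_of_mem_erase hu).symm
      rw [Finset.disjoint_left]
      intro x hx hxu
      rcases Finset.mem_insert.1 hx with rfl | hxt
      · exact hau hxu
      · exact Finset.disjoint_left.1 htu hxt hxu
    rintro x hx y hy hxy
    simp only [coe_insert, Set.mem_insert_iff, mem_coe] at hx hy
    simp only [Function.onFun, id_eq]
    rcases hx with rfl | hx <;> rcases hy with rfl | hy
    · exact absurd rfl hxy
    · exact hdisj y hy
    · exact (hdisj x hx).symm
    · exact Q.disjoint (Finset.mem_of_mem_erase hx) (Finset.mem_of_mem_erase hy) hxy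
  sup_parts := by
    ext b
    simp only [mem_sup, id_eq, Finset.mem_insert]
    constructor
    · rintro ⟨u, hu | hu, hb⟩
      · rw [hu] at hb
        rcases Finset.mem_insert.1 hb with rfl | hb
        · exact Or.inl rfl
        · exact Or.inr (Q.le ht hb)
      · exact Or.inr (Q.le (Finset.mem_of_mem_erase hu) hb)
    · rintro (rfl | hb)
      · exact ⟨insert b t, Or.inl rfl, Finset.mem_insert_self _ _⟩
      · rw [← Q.sup_parts] at hb
        obtain ⟨u, hu, hbu⟩ := mem_sup.1 hb
        rcases eq_or_ne u t with rfl | hut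
        · exact ⟨insert a u, Or.inl rfl, Finset.mem_insert_of_mem hbu⟩
        · exact ⟨u, Or.inr (Finset.mem_erase.2 ⟨hut, hu⟩), hbu⟩
  bot_notMem := by
    rw [Finset.bot_eq_empty, Finset.mem_insert]
    push_neg
    constructor
    · exact fun h => (Finset.insert_nonempty a t).ne_empty h.symm
    · intro h
      exact Q.ne_bot (Finset.mem_of_mem_erase h) rfl

lemma addToPart_parts (ha : a ∉ s) (Q : Finpartition s) {t : Finset α} (ht : t ∈ Q.parts) :
    (addToPart ha Q ht).parts = insert (insert a t) (Q.parts.erase t) := rfl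

lemma addToPart_card (ha : a ∉ s) (Q : Finpartition s) {t : Finset α} (ht : t ∈ Q.parts) :
    #(addToPart ha Q ht).parts = #Q.parts := by
  rw [addToPart_parts, card_insert_of_notMem, Finset.card_erase_of_mem ht]
  · have : 1 ≤ #Q.parts := Finset.card_pos.2 ⟨t, ht⟩
    omega
  · intro hmem
    have : a ∈ insert a t := mem_insert_self a t
    have hsub : insert a t ⊆ s := Q.le (Finset.mem_of_mem_erase hmem)
    exact ha (hsub this)


lemma part_addSingleton (ha : a ∉ s) (Q : Finpartition s) :
    (addSingleton ha Q).part a = {a} :=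
  Finpartition.part_eq_of_mem _
    (by rw [addSingleton_parts]; exact Finset.mem_insert_self _ _) (Finset.mem_singleton_self a)

lemma part_addToPart (ha : a ∉ s) (Q : Finpartition s) {t : Finset α} (ht : t ∈ Q.parts) :
    (addToPart ha Q ht).part a = insert a t :=
  Finpartition.part_eq_of_mem _
    (by rw [addToPart_parts]; exact Finset.mem_insert_self _ _) (Finset.mem_insert_self a t)

lemma part_addToPart_ne (ha : a ∉ s) (Q : Finpartition s) {t : Finset α} (ht : t ∈ Q.parts) :
    (addToPart ha Q ht).part a ≠ {a} := by
  rw [part_addToPart ha Q ht]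
  intro h
  obtain ⟨x, hx⟩ := Q.nonempty_of_mem_parts ht
  have hxa : x ∈ ({a} : Finset α) := h ▸ Finset.mem_insert_of_mem hx
  rw [Finset.mem_singleton] at hxa
  exact ha (hxa ▸ Q.le ht hx)

lemma singleton_not_mem (ha : a ∉ s) (Q : Finpartition s) : ({a} : Finset α) ∉ Q.parts :=
  fun h => ha (Q.le h (Finset.mem_singleton_self a))

lemma rest_addSingleton (ha : a ∉ s) (Q : Finpartition s) :
    rest ha (addSingleton ha Q) = Q := by
  apply Finpartition.ext
  rw [rest_parts_of_singleton ha _ (part_addSingleton ha Q), addSingleton_parts,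
    Finset.erase_insert (singleton_not_mem ha Q)]

lemma rest_addToPart (ha : a ∉ s) (Q : Finpartition s) {t : Finset α} (ht : t ∈ Q.parts) :
    rest ha (addToPart ha Q ht) = Q := by
  apply Finpartition.ext
  have hat : a ∉ t := fun h => ha (Q.le ht h)
  rw [rest_parts_of_ne_singleton ha _ (part_addToPart_ne ha Q ht), part_addToPart ha Q ht,
    Finset.erase_insert hat, addToPart_parts,
    Finset.erase_insert (by
      intro hmem
      exact ha (Q.le (Finset.mem_of_mem_erase hmem) (Finset.mem_insert_self a t))),
    Finset.insert_erase ht]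

lemma rest_card_of_singleton (ha : a ∉ s) (P : Finpartition (insert a s))
    (h : P.part a = {a}) : #(rest ha P).parts + 1 = #P.parts := by
  rw [rest_parts_of_singleton ha P h, Finset.card_erase_of_mem (h ▸ part_mem' P)]
  have : 1 ≤ #P.parts := Finset.card_pos.2 ⟨_, part_mem' P⟩
  omega

lemma rest_card_of_ne (ha : a ∉ s) (P : Finpartition (insert a s))
    (h : P.part a ≠ {a}) : #(rest ha P).parts = #P.parts := by
  rw [rest_parts_of_ne_singleton ha P h,
    Finset.card_insert_of_notMem (erase_part_not_mem ha P),
    Finset.card_erase_of_mem (part_mem' P)]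
  have : 1 ≤ #P.parts := Finset.card_pos.2 ⟨_, part_mem' P⟩
  omega

private lemma sum_inr_eq {k : ℕ} {Q Q' : {Q : Finpartition s // #Q.parts = k + 1}}
    (h : Q.1 = Q'.1) {t : Finset α} {ht : t ∈ Q.1.parts} {t' : Finset α}
    {ht' : t' ∈ Q'.1.parts} (h2 : t = t') :
    (Sum.inr ⟨Q, ⟨t, ht⟩⟩ : {Q : Finpartition s // #Q.parts = k} ⊕
        (Σ Q : {Q : Finpartition s // #Q.parts = k + 1}, {t // t ∈ Q.1.parts}))
      = Sum.inr ⟨Q', ⟨t', ht'⟩⟩ := by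
  obtain ⟨Q, hQ⟩ := Q
  obtain ⟨Q', hQ'⟩ := Q'
  dsimp at h h2
  subst h
  subst h2
  rfl

noncomputable def insertEquiv (ha : a ∉ s) (k : ℕ) :
    {P : Finpartition (insert a s) // #P.parts = k + 1} ≃
      {Q : Finpartition s // #Q.parts = k} ⊕
        (Σ Q : {Q : Finpartition s // #Q.parts = k + 1}, {t // t ∈ Q.1.parts}) where
  toFun x :=
    if h : x.1.part a = {a} then
      Sum.inl ⟨rest ha x.1, by have := rest_card_of_singleton ha x.1 h; have := x.2; omega⟩
    else
      Sum.inr ⟨⟨rest ha x.1, by rw [rest_card_of_ne ha x.1 h]; exact x.2⟩,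
        ⟨(x.1.part a).erase a, by
          rw [rest_parts_of_ne_singleton ha x.1 h]; exact Finset.mem_insert_self _ _⟩⟩
  invFun x :=
    match x with
    | Sum.inl ⟨Q, hQ⟩ => ⟨addSingleton ha Q, by rw [addSingleton_card]; omega⟩
    | Sum.inr ⟨⟨Q, hQ⟩, ⟨t, ht⟩⟩ => ⟨addToPart ha Q ht, by rw [addToPart_card]; exact hQ⟩
  left_inv x := by
    dsimp only
    by_cases h : x.1.part a = {a}
    · rw [dif_pos h]
      apply Subtype.ext
      apply Finpartition.ext
      show (addSingleton ha (rest ha x.1)).parts = x.1.parts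
      rw [addSingleton_parts, rest_parts_of_singleton ha x.1 h,
        Finset.insert_erase (h ▸ part_mem' x.1)]
    · rw [dif_neg h]
      apply Subtype.ext
      apply Finpartition.ext
      show (addToPart ha (rest ha x.1)
          (show ((x.1.part a).erase a) ∈ (rest ha x.1).parts by
            rw [rest_parts_of_ne_singleton ha x.1 h]
            exact Finset.mem_insert_self _ _)).parts = x.1.parts
      rw [addToPart_parts, Finset.insert_erase (mem_part' x.1),
        rest_parts_of_ne_singleton ha x.1 h,
        Finset.erase_insert (erase_part_not_mem ha x.1),
        Finset.insert_erase (part_mem' x.1)]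
  right_inv x := by
    match x with
    | Sum.inl ⟨Q, hQ⟩ =>
      show (if h : (addSingleton ha Q).part a = {a} then _ else _) = _
      rw [dif_pos (part_addSingleton ha Q)]
      congr 1
      exact Subtype.ext (rest_addSingleton ha Q)
    | Sum.inr ⟨⟨Q, hQ⟩, ⟨t, ht⟩⟩ =>
      show (if h : (addToPart ha Q ht).part a = {a} then _ else _) = _
      rw [dif_neg (part_addToPart_ne ha Q ht)]
      have hat : a ∉ t := fun h => ha (Q.le ht h)
      exact sum_inr_eq (rest_addToPart ha Q ht)
        (by rw [part_addToPart ha Q ht, Finset.erase_insert hat])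

end Insert


section Count

variable [Fintype α] {a : α} {s : Finset α}

lemma St_insert (ha : a ∉ s) (k : ℕ) :
    St (insert a s) (k + 1) = St s k + (k + 1) * St s (k + 1) := by
  rw [St, Nat.card_congr (insertEquiv ha k), Nat.card_sum]
  congr 1
  haveI : Fintype {Q : Finpartition s // #Q.parts = k + 1} := Fintype.ofFinite _
  rw [Nat.card_eq_fintype_card, Fintype.card_sigma]
  have h1 : ∀ Q : {Q : Finpartition s // #Q.parts = k + 1},
      Fintype.card {t // t ∈ Q.1.parts} = k + 1 := fun Q => by
    rw [Fintype.card_coe]; exact Q.2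
  rw [Finset.sum_congr rfl fun Q _ => h1 Q, Finset.sum_const, smul_eq_mul,
    Finset.card_univ, mul_comm, St, Nat.card_eq_fintype_card]

lemma St_eq_zero_of_lt {k : ℕ} (h : #s < k) : St s k = 0 := by
  haveI : IsEmpty {P : Finpartition s // #P.parts = k} :=
    ⟨fun P => absurd P.2 (by have := P.1.card_parts_le_card; omega)⟩
  exact Nat.card_of_isEmpty

lemma St_empty_zero : St (∅ : Finset α) 0 = 1 := by
  haveI : Unique {P : Finpartition (∅ : Finset α) // #P.parts = 0} :=
    { default := ⟨(Finpartition.empty (Finset α)).copy Finset.bot_eq_empty, by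
        simp [Finpartition.empty, Finpartition.copy]⟩
      uniq := fun P => by
        apply Subtype.ext
        apply Finpartition.ext
        have h1 : P.1.parts = ∅ := Finpartition.parts_eq_empty_iff.2 Finset.bot_eq_empty.symm
        rw [h1]
        rfl }
  exact Nat.card_unique

lemma St_zero_of_nonempty (hs : s.Nonempty) : St s 0 = 0 := by
  haveI : IsEmpty {P : Finpartition s // #P.parts = 0} :=
    ⟨fun P => hs.ne_empty (Finset.bot_eq_empty ▸
      Finpartition.parts_eq_empty_iff.1 (Finset.card_eq_zero.1 P.2))⟩
  exact Nat.card_of_isEmpty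

end Count

lemma stirling_eq_St (n k : ℕ) : stirling n k = St (Finset.univ : Finset (Fin n)) k := rfl

lemma stirling_succ_succ (n k : ℕ) :
    stirling (n + 1) (k + 1) = stirling n k + (k + 1) * stirling n (k + 1) := by
  set f : Fin n ↪ Fin (n + 1) := ⟨Fin.castSucc, Fin.castSucc_injective n⟩ with hf
  have ha : Fin.last n ∉ (Finset.univ : Finset (Fin n)).map f := by
    rw [Finset.mem_map]
    rintro ⟨y, -, hy⟩
    exact absurd hy (Fin.castSucc_lt_last y).ne
  have huniv : (Finset.univ : Finset (Fin (n + 1)))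
      = insert (Fin.last n) ((Finset.univ : Finset (Fin n)).map f) := by
    ext x
    simp only [Finset.mem_univ, true_iff, Finset.mem_insert, Finset.mem_map,
      Finset.mem_univ, true_and]
    rcases Fin.eq_castSucc_or_eq_last x with ⟨y, rfl⟩ | rfl
    · exact Or.inr ⟨y, rfl⟩
    · exact Or.inl rfl
  rw [stirling_eq_St, huniv, St_insert ha, St_map, St_map, ← stirling_eq_St, ← stirling_eq_St]

lemma stirling_eq_zero_of_lt {n k : ℕ} (h : n < k) : stirling n k = 0 := by
  rw [stirling_eq_St]
  exact St_eq_zero_of_lt (by simpa using h)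

lemma stirling_zero_zero : stirling 0 0 = 1 := by
  rw [stirling_eq_St]
  rw [show (Finset.univ : Finset (Fin 0)) = ∅ from rfl]
  exact St_empty_zero

lemma stirling_self (n : ℕ) : stirling n n = 1 := by
  induction n with
  | zero => exact stirling_zero_zero
  | succ n ih =>
    rw [stirling_succ_succ, ih, stirling_eq_zero_of_lt (Nat.lt_succ_self n)]
    ring

lemma stirling_zero {n : ℕ} (hn : 1 ≤ n) : stirling n 0 = 0 := by
  haveI : Nonempty (Fin n) := ⟨⟨0, hn⟩⟩
  rw [stirling_eq_St]
  exact St_zero_of_nonempty Finset.univ_nonempty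



noncomputable def bell (n : ℕ) : Polynomial ℝ :=
  ∑ k ∈ Finset.range (n + 1), Polynomial.C (stirling n k : ℝ) * Polynomial.X ^ k

lemma bell_coeff (n k : ℕ) : (bell n).coeff k = (stirling n k : ℝ) := by
  rw [bell, Polynomial.finset_sum_coeff]
  simp only [Polynomial.coeff_C_mul, Polynomial.coeff_X_pow]
  rcases lt_or_ge k (n + 1) with h | h
  · rw [Finset.sum_eq_single k (fun b _ hb => by simp [Ne.symm hb])
      (fun h' => absurd (Finset.mem_range.2 h) h')]
    simp
  · rw [stirling_eq_zero_of_lt (by omega), Nat.cast_zero]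
    apply Finset.sum_eq_zero
    intro b hb
    have hbk : k ≠ b := by have := Finset.mem_range.1 hb; omega
    simp [hbk]

lemma bell_succ (n : ℕ) :
    bell (n + 1) = Polynomial.X * (bell n + Polynomial.derivative (bell n)) := by
  apply Polynomial.ext
  intro k
  cases k with
  | zero =>
    rw [bell_coeff, Polynomial.mul_coeff_zero, Polynomial.coeff_X_zero, zero_mul,
      stirling_zero (Nat.le_add_left 1 n)]
    simp
  | succ k =>
    rw [bell_coeff, Polynomial.coeff_X_mul, Polynomial.coeff_add, bell_coeff,
      Polynomial.coeff_derivative, bell_coeff, stirling_succ_succ]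
    push_cast
    ring


lemma rolle_finset (f : ℝ → ℝ) (hf : Continuous f) :
    ∀ (N : ℕ) (S : Finset ℝ) (_ : #S = N) (_ : ∀ x ∈ S, f x = 0) (hne : S.Nonempty),
    ∃ T : Finset ℝ, #T + 1 = #S ∧ (∀ t ∈ T, deriv f t = 0) ∧
      ∀ t ∈ T, S.min' hne < t ∧ t < S.max' hne := by
  intro N
  induction N with
  | zero =>
    intro S hcard _ hne
    exact absurd hcard (by have := hne.card_pos; omega)
  | succ N ih =>
    intro S hcard hS hne
    by_cases h1 : #S = 1
    · exact ⟨∅, by rw [Finset.card_empty]; omega, by simp, by simp⟩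
    · have h2 : 2 ≤ #S := by have := hne.card_pos; omega
      set M := S.max' hne with hM
      set S' := S.erase M with hS'
      have hcard' : #S' = N := by
        rw [hS', Finset.card_erase_of_mem (S.max'_mem hne)]; omega
      have hS'ne : S'.Nonempty := Finset.card_pos.1 (by omega)
      obtain ⟨T', hT'c, hT'd, hT'r⟩ :=
        ih S' hcard' (fun x hx => hS x (Finset.mem_of_mem_erase hx)) hS'ne
      set M' := S'.max' hS'ne with hM'
      have hM'S : M' ∈ S' := S'.max'_mem hS'ne
      have hM'M : M' < M :=
        lt_of_le_of_ne (S.le_max' M' (Finset.mem_of_mem_erase hM'S))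
          (Finset.mem_erase.1 hM'S).1
      obtain ⟨c, hc, hdc⟩ := exists_deriv_eq_zero hM'M hf.continuousOn
        (by rw [hS M' (Finset.mem_of_mem_erase hM'S), hS M (S.max'_mem hne)])
      have hcT' : c ∉ T' := fun hmem => absurd (hT'r c hmem).2 (not_lt.2 hc.1.le)
      refine ⟨insert c T', ?_, ?_, ?_⟩
      · rw [Finset.card_insert_of_notMem hcT']; omega
      · intro t ht
        rcases Finset.mem_insert.1 ht with rfl | ht
        · exact hdc
        · exact hT'd t ht
      · have hminle : S.min' hne ≤ S'.min' hS'ne :=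
          S.min'_le _ (Finset.mem_of_mem_erase (S'.min'_mem hS'ne))
        intro t ht
        rcases Finset.mem_insert.1 ht with rfl | ht
        · exact ⟨lt_of_le_of_lt (le_trans hminle (S'.min'_le M' hM'S)) hc.1, hc.2⟩
        · obtain ⟨hl, hr⟩ := hT'r t ht
          exact ⟨lt_of_le_of_lt hminle hl, lt_trans hr hM'M⟩

lemma eq_prod_of_monic_of_roots (p : Polynomial ℝ) (hp : p.Monic) (Z : Finset ℝ)
    (hdeg : p.natDegree = #Z) (hz : ∀ z ∈ Z, p.eval z = 0) :
    p = ∏ z ∈ Z, (Polynomial.X - Polynomial.C z) := by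
  classical
  have hp0 : p ≠ 0 := hp.ne_zero
  have hle : Z.val ≤ p.roots := by
    rw [Multiset.le_iff_count]
    intro a
    by_cases ha : a ∈ Z
    · rw [Multiset.count_eq_one_of_mem Z.nodup ha, Polynomial.count_roots]
      exact (Polynomial.rootMultiplicity_pos hp0).mpr (hz a ha)
    · simp [Multiset.count_eq_zero.2 (fun h => ha h)]
  have hcard : Multiset.card p.roots ≤ #Z := hdeg ▸ p.card_roots'
  have hroots : Z.val = p.roots := Multiset.eq_of_le_of_card_le hle hcard
  have hsplits : Polynomial.Splits p := by
    rw [Polynomial.splits_iff_card_roots, ← hroots, hdeg]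
    rfl
  have := hsplits.eq_prod_roots_of_monic hp
  rw [this, ← hroots]
  rfl


lemma eval_one_prod_pos {Y : Finset ℝ} (hY : ∀ y ∈ Y, y < 0) :
    True := trivial

theorem bell_factor : ∀ n : ℕ, 1 ≤ n → ∃ Y : Finset ℝ, #Y = n - 1 ∧ (∀ y ∈ Y, y < 0) ∧
    bell n = Polynomial.X * ∏ y ∈ Y, (Polynomial.X - Polynomial.C y) := by
  intro n
  induction n with
  | zero => omega
  | succ n ih =>
    intro _
    rcases Nat.eq_zero_or_pos n with rfl | hn
    · refine ⟨∅, rfl, by simp, ?_⟩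
      rw [Finset.prod_empty, mul_one, bell]
      have h0 : stirling (0 + 1) 0 = 0 := stirling_zero le_rfl
      have h1 : stirling (0 + 1) 1 = 1 := stirling_self 1
      simp [Finset.sum_range_succ, h0, h1]
    obtain ⟨Y, hYcard, hYneg, hYeq⟩ := ih hn
    -- set up
    set S : Finset ℝ := insert (0 : ℝ) Y with hSdef
    have h0Y : (0 : ℝ) ∉ Y := fun h => absurd (hYneg 0 h) (lt_irrefl 0)
    have hScard : #S = n := by rw [hSdef, Finset.card_insert_of_notMem h0Y]; omega
    have hSne : S.Nonempty := ⟨0, Finset.mem_insert_self 0 Y⟩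
    have hprodS : bell n = ∏ z ∈ S, (Polynomial.X - Polynomial.C z) := by
      rw [hSdef, Finset.prod_insert h0Y, Polynomial.C_0, sub_zero, hYeq]
    have hmonic : (bell n).Monic := by
      rw [hprodS]
      exact Polynomial.monic_prod_of_monic _ _ fun z _ => Polynomial.monic_X_sub_C z
    have hdeg : (bell n).natDegree = n := by
      rw [hprodS, Polynomial.natDegree_prod _ _ fun z _ => Polynomial.X_sub_C_ne_zero z]
      simp [Polynomial.natDegree_X_sub_C, hScard]
    have hbne : bell n ≠ 0 := hmonic.ne_zero
    set Q : Polynomial ℝ := bell n + Polynomial.derivative (bell n) with hQdef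
    have hQmonic : Q.Monic := hmonic.add_of_left (Polynomial.degree_derivative_lt hbne)
    have hQdeg : Q.natDegree = n := by
      rw [hQdef, Polynomial.natDegree_eq_of_degree_eq
        (Polynomial.degree_add_eq_left_of_degree_lt (Polynomial.degree_derivative_lt hbne))]
      exact hdeg
    have hQne : Q ≠ 0 := hQmonic.ne_zero
    -- the function g
    set g : ℝ → ℝ := fun x => Real.exp x * Polynomial.eval x (bell n) with hgdef
    have hg : ∀ x : ℝ, HasDerivAt g (Real.exp x * Polynomial.eval x Q) x := by
      intro x
      have h1 := (Real.hasDerivAt_exp x).mul ((bell n).hasDerivAt x)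
      have h2 : Real.exp x * Polynomial.eval x Q = Real.exp x * Polynomial.eval x (bell n)
          + Real.exp x * Polynomial.eval x (Polynomial.derivative (bell n)) := by
        rw [hQdef, Polynomial.eval_add]; ring
      rw [h2]; exact h1
    have hgcont : Continuous g := Real.continuous_exp.mul (bell n).continuous
    have hSroot : ∀ z ∈ S, g z = 0 := by
      intro z hz
      rw [hgdef]
      simp only
      rw [hprodS, Polynomial.eval_prod, Finset.prod_eq_zero hz (by simp), mul_zero]
    -- Rolle
    obtain ⟨T, hTcard, hTd, hTr⟩ := rolle_finset g hgcont n S hScard hSroot hSne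
    have hmax : S.max' hSne = 0 := by
      apply le_antisymm
      · apply Finset.max'_le
        intro y hy
        rcases Finset.mem_insert.1 hy with rfl | hy
        · exact le_refl 0
        · exact (hYneg y hy).le
      · exact S.le_max' 0 (Finset.mem_insert_self 0 Y)
    set m := S.min' hSne with hmdef
    have hmS : m ∈ S := S.min'_mem hSne
    have hm0 : m ≤ 0 := S.min'_le 0 (Finset.mem_insert_self 0 Y)
    have hQT : ∀ t ∈ T, Polynomial.eval t Q = 0 := by
      intro t ht
      have h1 := (hg t).deriv
      have h2 := hTd t ht
      rw [h1] at h2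
      exact (mul_eq_zero.1 h2).resolve_left (Real.exp_ne_zero t)
    -- value of Q at m
    have hA : Polynomial.eval m Q = ∏ z ∈ S.erase m, (m - z) := by
      rw [hQdef, Polynomial.eval_add, hprodS]
      rw [Polynomial.eval_prod, Finset.prod_eq_zero hmS (by simp), zero_add]
      conv_lhs => rw [← Finset.mul_prod_erase _ _ hmS]
      rw [Polynomial.derivative_mul, Polynomial.derivative_X_sub_C, one_mul,
        Polynomial.eval_add, Polynomial.eval_mul, Polynomial.eval_sub,
        Polynomial.eval_X, Polynomial.eval_C, sub_self, zero_mul, add_zero,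
        Polynomial.eval_prod]
      exact Finset.prod_congr rfl fun z _ => by simp
    have hEcard : #(S.erase m) = n - 1 := by rw [Finset.card_erase_of_mem hmS, hScard]
    have hmlt : ∀ z ∈ S.erase m, m < z := fun z hz =>
      lt_of_le_of_ne (S.min'_le z (Finset.mem_of_mem_erase hz))
        (Ne.symm (Finset.mem_erase.1 hz).1)
    have hAsign : 0 < (-1 : ℝ) ^ (n - 1) * Polynomial.eval m Q := by
      have h1 : (-1 : ℝ) ^ (n - 1) * Polynomial.eval m Q = ∏ z ∈ S.erase m, (z - m) := by
        rw [hA, ← hEcard, ← Finset.prod_const (-1 : ℝ), ← Finset.prod_mul_distrib]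
        exact Finset.prod_congr rfl fun z _ => by ring
      rw [h1]
      exact Finset.prod_pos fun z hz => sub_pos.2 (hmlt z hz)
    -- far left point
    have hfar : ∃ w : ℝ, w < m ∧ (-1 : ℝ) ^ (n - 1) * Polynomial.eval w Q < 0 := by
      set R : Polynomial ℝ := Polynomial.C ((-1 : ℝ) ^ n) * Q.comp (-Polynomial.X) with hRdef
      have hnX : (-Polynomial.X : Polynomial ℝ).natDegree = 1 := by
        rw [Polynomial.natDegree_neg, Polynomial.natDegree_X]
      have hevalR : ∀ y : ℝ, Polynomial.eval y R = (-1 : ℝ) ^ n * Polynomial.eval (-y) Q := by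
        intro y
        rw [hRdef, Polynomial.eval_mul, Polynomial.eval_C, Polynomial.eval_comp]
        simp
      have hRlead : R.leadingCoeff = 1 := by
        rw [hRdef, Polynomial.leadingCoeff_mul, Polynomial.leadingCoeff_C,
          Polynomial.leadingCoeff_comp (by rw [hnX]; omega)]
        rw [hQmonic.leadingCoeff, one_mul]
        rw [Polynomial.leadingCoeff_neg, Polynomial.leadingCoeff_X, hQdeg]
        rw [← mul_pow]
        norm_num
      have hRne : R ≠ 0 := fun h => by
        rw [h, Polynomial.leadingCoeff_zero] at hRlead
        exact zero_ne_one hRlead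
      have hRdeg : R.natDegree = n := by
        rw [hRdef, Polynomial.natDegree_C_mul (by positivity), Polynomial.natDegree_comp,
          hnX, hQdeg, mul_one]
      have hRdegpos : 0 < R.degree := by
        rw [← Polynomial.natDegree_pos_iff_degree_pos, hRdeg]
        omega
      have htend := Polynomial.tendsto_atTop_of_leadingCoeff_nonneg R hRdegpos
        (by rw [hRlead]; exact zero_le_one)
      have h1 : ∀ᶠ y in Filter.atTop, (1 : ℝ) ≤ Polynomial.eval y R := htend.eventually_ge_atTop 1
      have h2 : ∀ᶠ y in Filter.atTop, -m + 1 ≤ y := Filter.eventually_ge_atTop _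
      obtain ⟨y, hy1, hy2⟩ := (h1.and h2).exists
      refine ⟨-y, by linarith, ?_⟩
      rw [hevalR y] at hy1
      have h4 : (-1 : ℝ) ^ n = -(-1 : ℝ) ^ (n - 1) := by
        have hn1 : n - 1 + 1 = n := by omega
        conv_lhs => rw [← hn1]
        rw [pow_succ]
        ring
      rw [h4] at hy1
      linarith
    obtain ⟨w, hwm, hwsign⟩ := hfar
    -- IVT
    have hIVT : ∃ c, c ∈ Set.Ioo w m ∧ Polynomial.eval c Q = 0 := by
      set h : ℝ → ℝ := fun x => (-1 : ℝ) ^ (n - 1) * Polynomial.eval x Q with hhdef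
      have hhcont : ContinuousOn h (Set.Icc w m) :=
        (continuous_const.mul Q.continuous).continuousOn
      have hmem : (0 : ℝ) ∈ Set.Ioo (h w) (h m) := ⟨hwsign, hAsign⟩
      obtain ⟨c, hc, hc0⟩ := intermediate_value_Ioo hwm.le hhcont hmem
      refine ⟨c, hc, ?_⟩
      simp only [hhdef] at hc0
      have hne0 : (-1 : ℝ) ^ (n - 1) ≠ 0 := pow_ne_zero _ (by norm_num)
      exact (mul_eq_zero.1 hc0).resolve_left hne0
    obtain ⟨c, hcmem, hcroot⟩ := hIVT
    -- assemble root set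
    have hcT : c ∉ T := fun hmem => absurd (hTr c hmem).1 (not_lt.2 (le_of_lt (lt_of_lt_of_le hcmem.2 le_rfl)))
    refine ⟨insert c T, ?_, ?_, ?_⟩
    · rw [Finset.card_insert_of_notMem hcT, Nat.add_sub_cancel]
      omega
    · intro y hy
      rcases Finset.mem_insert.1 hy with rfl | hy
      · exact lt_of_lt_of_le hcmem.2 hm0
      · exact lt_of_lt_of_le (hTr y hy).2 (le_of_eq hmax)
    · rw [bell_succ]
      congr 1
      show Q = _
      apply eq_prod_of_monic_of_roots Q hQmonic _ ?_ ?_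
      · rw [hQdeg, Finset.card_insert_of_notMem hcT]
        omega
      · intro z hz
        rcases Finset.mem_insert.1 hz with rfl | hz
        · exact hcroot
        · exact hQT z hz




/-- the alternating Stirling polynomial -/
noncomputable def qn (n : ℕ) : Polynomial ℝ :=
  ∑ j ∈ Finset.range n, Polynomial.C ((-1 : ℝ) ^ j * (stirling n (n - j) : ℝ))
    * Polynomial.X ^ j

lemma qn_coeff (n : ℕ) (hn : 1 ≤ n) (j : ℕ) :
    (qn n).coeff j = (-1 : ℝ) ^ j * (stirling n (n - j) : ℝ) := by
  rw [qn, Polynomial.finset_sum_coeff]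
  simp only [Polynomial.coeff_C_mul, Polynomial.coeff_X_pow]
  rcases lt_or_ge j n with h | h
  · rw [Finset.sum_eq_single j (fun b _ hb => by simp [Ne.symm hb])
      (fun h' => absurd (Finset.mem_range.2 h) h')]
    simp
  · have hnj : n - j = 0 := by omega
    rw [hnj, stirling_zero hn, Nat.cast_zero, mul_zero]
    apply Finset.sum_eq_zero
    intro b hb
    have hbj : j ≠ b := by have := Finset.mem_range.1 hb; omega
    simp [hbj]

theorem qn_eq_prod (n : ℕ) (hn : 1 ≤ n) :
    ∃ Y : Finset ℝ, #Y = n - 1 ∧ (∀ y ∈ Y, y < 0) ∧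
      qn n = ∏ y ∈ Y, (1 + Polynomial.C y * Polynomial.X) := by
  obtain ⟨Y, hYcard, hYneg, hYeq⟩ := bell_factor n hn
  refine ⟨Y, hYcard, hYneg, ?_⟩
  set u : Polynomial ℝ := ∏ y ∈ Y, (Polynomial.X - Polynomial.C y) with hu
  have hucoeff : ∀ k, u.coeff k = (stirling n (k + 1) : ℝ) := by
    intro k
    have h1 : (bell n).coeff (k + 1) = u.coeff k := by
      rw [hYeq, Polynomial.coeff_X_mul]
    rw [← h1, bell_coeff]
  have hudeg : u.natDegree = n - 1 := by
    rw [hu, Polynomial.natDegree_prod _ _ fun y _ => Polynomial.X_sub_C_ne_zero y]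
    simp [Polynomial.natDegree_X_sub_C, hYcard]
  have huval : ∀ x : ℝ, Polynomial.eval x u
      = ∑ k ∈ Finset.range n, (stirling n (k + 1) : ℝ) * x ^ k := by
    intro x
    conv_lhs => rw [Polynomial.as_sum_range' u n (by omega)]
    rw [Polynomial.eval_finset_sum]
    exact Finset.sum_congr rfl fun k _ => by rw [Polynomial.eval_monomial, hucoeff]
  apply Polynomial.eq_of_infinite_eval_eq
  apply Set.Infinite.mono (s := {x : ℝ | x ≠ 0})
  swap
  · exact (Set.finite_singleton 0).infinite_compl
  intro t ht
  simp only [Set.mem_setOf_eq] at ht ⊢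
  -- evaluate both sides
  rw [Polynomial.eval_prod]
  have hfac : ∀ y ∈ Y, Polynomial.eval t (1 + Polynomial.C y * Polynomial.X)
      = -t * ((-1 / t) - y) := by
    intro y _
    simp only [Polynomial.eval_add, Polynomial.eval_one, Polynomial.eval_mul,
      Polynomial.eval_C, Polynomial.eval_X]
    field_simp
    ring
  rw [Finset.prod_congr rfl hfac, Finset.prod_mul_distrib, Finset.prod_const]
  have hYprod : ∏ y ∈ Y, ((-1 / t) - y) = Polynomial.eval (-1 / t) u := by
    rw [hu, Polynomial.eval_prod]
    exact Finset.prod_congr rfl fun y _ => by simp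
  rw [hYprod, huval, hYcard, Finset.mul_sum, qn, Polynomial.eval_finset_sum]
  rw [← Finset.sum_range_reflect]
  apply Finset.sum_congr rfl
  intro j hj
  have hjn : j < n := Finset.mem_range.1 hj
  rw [Polynomial.eval_mul, Polynomial.eval_pow, Polynomial.eval_C, Polynomial.eval_X]
  have hidx : n - (n - 1 - j) = j + 1 := by omega
  rw [hidx]
  set d : ℕ := n - 1 - j with hd
  have hnd : n - 1 = d + j := by omega
  rw [hnd]
  have key : ∀ S : ℝ, (-t) ^ (d + j) * (S * (-1 / t) ^ j) = (-1) ^ d * S * t ^ d := by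
    intro S
    have e2 : (-t : ℝ) ^ j * (-1 / t) ^ j = 1 := by
      rw [← mul_pow]
      have e3 : (-t) * (-1 / t) = 1 := by field_simp
      rw [e3, one_pow]
    calc (-t) ^ (d + j) * (S * (-1 / t) ^ j)
        = ((-t) ^ j * (-1 / t) ^ j) * ((-t) ^ d * S) := by rw [pow_add]; ring
      _ = (-t) ^ d * S := by rw [e2, one_mul]
      _ = (-1) ^ d * S * t ^ d := by rw [neg_pow]; ring
  exact (key _).symm


noncomputable def PnNegR (n : ℕ) : PowerSeries ℝ :=
  PowerSeries.mk fun j => (-1 : ℝ) ^ j * (stirling n (n - j) : ℝ)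

lemma PnNegR_eq_coe (n : ℕ) (hn : 1 ≤ n) : PnNegR n = (qn n : PowerSeries ℝ) := by
  apply PowerSeries.ext
  intro N
  rw [PnNegR, PowerSeries.coeff_mk, Polynomial.coeff_coe, qn_coeff n hn]

lemma geom_inv (y : ℝ) :
    ((1 + Polynomial.C y * Polynomial.X : Polynomial ℝ) : PowerSeries ℝ)
      * PowerSeries.mk (fun ℓ => (-y) ^ ℓ) = 1 := by
  have hcoe : ((1 + Polynomial.C y * Polynomial.X : Polynomial ℝ) : PowerSeries ℝ)
      = 1 + PowerSeries.C y * PowerSeries.X := by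
    push_cast
    rfl
  rw [hcoe, add_mul, one_mul, mul_assoc]
  apply PowerSeries.ext
  intro N
  rw [PowerSeries.coeff_one, map_add]
  cases N with
  | zero =>
    simp [PowerSeries.coeff_zero_eq_constantCoeff, PowerSeries.coeff_mk]
  | succ N =>
    rw [PowerSeries.coeff_mk, if_neg (Nat.succ_ne_zero N)]
    have hX : PowerSeries.coeff (N + 1)
        (PowerSeries.C y * (PowerSeries.X * PowerSeries.mk fun ℓ => (-y) ^ ℓ))
        = y * (-y) ^ N := by
      rw [PowerSeries.coeff_C_mul, PowerSeries.coeff_succ_X_mul, PowerSeries.coeff_mk]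
    rw [hX, pow_succ]
    ring

theorem exists_inverse_real (n : ℕ) (hn : 1 ≤ n) :
    ∃ G : PowerSeries ℝ, PnNegR n * G = 1 ∧ ∀ N, 0 ≤ PowerSeries.coeff N G := by
  obtain ⟨Y, hYcard, hYneg, hq⟩ := qn_eq_prod n hn
  refine ⟨∏ y ∈ Y, PowerSeries.mk (fun ℓ => (-y) ^ ℓ), ?_, ?_⟩
  · rw [PnNegR_eq_coe n hn, hq]
    have hcoeprod : ((∏ y ∈ Y, (1 + Polynomial.C y * Polynomial.X) : Polynomial ℝ) :
        PowerSeries ℝ)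
        = ∏ y ∈ Y, ((1 + Polynomial.C y * Polynomial.X : Polynomial ℝ) : PowerSeries ℝ) :=
      map_prod Polynomial.coeToPowerSeries.ringHom _ _
    rw [hcoeprod, ← Finset.prod_mul_distrib,
      Finset.prod_congr rfl fun y _ => geom_inv y, Finset.prod_const_one]
  · apply Finset.prod_induction _ (fun φ => ∀ N, 0 ≤ PowerSeries.coeff N φ)
    · intro a b ha hb N
      rw [PowerSeries.coeff_mul]
      exact Finset.sum_nonneg fun p _ => mul_nonneg (ha _) (hb _)
    · intro N
      rw [PowerSeries.coeff_one]
      split <;> norm_num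
    · intro y hy N
      rw [PowerSeries.coeff_mk]
      exact pow_nonneg (by linarith [hYneg y hy]) N

noncomputable def Zn (n : ℕ) : PowerSeries ℤ :=
  PowerSeries.mk fun j => (-1 : ℤ) ^ j * (stirling n (n - j) : ℤ)

lemma Zn_unit (n : ℕ) : IsUnit (Zn n) := by
  apply PowerSeries.isUnit_iff_constantCoeff.2
  rw [Zn, PowerSeries.constantCoeff_mk]
  simp [stirling_self]

lemma map_Zn_Q (n : ℕ) : PowerSeries.map (Int.castRingHom ℚ) (Zn n) = PnNeg n := by
  apply PowerSeries.ext
  intro N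
  rw [PowerSeries.coeff_map, Zn, PowerSeries.coeff_mk, PnNeg, PowerSeries.coeff_mk]
  simp [Int.coe_castRingHom]

lemma map_Zn_R (n : ℕ) : PowerSeries.map (Int.castRingHom ℝ) (Zn n) = PnNegR n := by
  apply PowerSeries.ext
  intro N
  rw [PowerSeries.coeff_map, Zn, PowerSeries.coeff_mk, PnNegR, PowerSeries.coeff_mk]
  simp [Int.coe_castRingHom]

end StirlingAux


open StirlingAux in
/-- every coefficient of the inverse power series `1/P_n(-t)` is a
nonnegative integer. -/
theorem stmt_19 (n : ℕ) (hn : 1 ≤ n) (N : ℕ) :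
    ∃ m : ℕ, PowerSeries.coeff (R := ℚ) N (PnNeg n)⁻¹ = (m : ℚ) := by
  obtain ⟨G, hG, hGpos⟩ := exists_inverse_real n hn
  obtain ⟨un, hun⟩ := Zn_unit n
  set W : PowerSeries ℤ := ↑un⁻¹ with hW
  have hZW : Zn n * W = 1 := by rw [← hun, hW]; exact_mod_cast un.mul_inv
  have h1 : PnNeg n * PowerSeries.map (Int.castRingHom ℚ) W = 1 := by
    rw [← map_Zn_Q, ← map_mul, hZW, map_one]
  have hconst : PowerSeries.constantCoeff (PnNeg n) ≠ 0 := by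
    rw [PnNeg, PowerSeries.constantCoeff_mk]
    simp [stirling_self]
  have hinv : (PnNeg n)⁻¹ = PowerSeries.map (Int.castRingHom ℚ) W := by
    have h2 := PowerSeries.inv_mul_cancel (PnNeg n) hconst
    calc (PnNeg n)⁻¹ = (PnNeg n)⁻¹ * (PnNeg n * PowerSeries.map (Int.castRingHom ℚ) W) := by
          rw [h1, mul_one]
      _ = ((PnNeg n)⁻¹ * PnNeg n) * PowerSeries.map (Int.castRingHom ℚ) W := by ring
      _ = PowerSeries.map (Int.castRingHom ℚ) W := by rw [h2, one_mul]
  have h3 : PnNegR n * PowerSeries.map (Int.castRingHom ℝ) W = 1 := by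
    rw [← map_Zn_R, ← map_mul, hZW, map_one]
  have hGW : G = PowerSeries.map (Int.castRingHom ℝ) W := by
    calc G = (PnNegR n * PowerSeries.map (Int.castRingHom ℝ) W) * G := by rw [h3, one_mul]
      _ = (PnNegR n * G) * PowerSeries.map (Int.castRingHom ℝ) W := by ring
      _ = PowerSeries.map (Int.castRingHom ℝ) W := by rw [hG, one_mul]
  have h4 : 0 ≤ PowerSeries.coeff N W := by
    have h5 := hGpos N
    rw [hGW, PowerSeries.coeff_map] at h5
    simp only [Int.coe_castRingHom] at h5
    exact_mod_cast h5
  refine ⟨(PowerSeries.coeff N W).toNat, ?_⟩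
  rw [hinv, PowerSeries.coeff_map]
  have h6 : ((PowerSeries.coeff N W).toNat : ℤ) = PowerSeries.coeff N W :=
    Int.toNat_of_nonneg h4
  rw [← h6]
  simp only [Int.coe_castRingHom]
  exact_mod_cast rfl
end
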